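/- arXiv:2006.13875 — 4 statements merged into one kernel-verified Lean document; each statement's English description precedes it below -/
import Mathlib

section
/- For every fixed Δ ∈ ℝ, the BC bridge function r ↦ F(r,Δ) is twice differentiable on (−1,1) with second derivative ∂²F/∂r² (r,Δ) = φ₂(Δ, 0; r/√2) · (2√2 · r / (2−r²)²) · (2 − r² − 2Δ²). -/
set_option maxHeartbeats 1000000

open Real MeasureTheory Set Filter

/-- Standard normal density. -/
noncomputable def stdPdf (x : ℝ) : ℝ :=
  (Real.sqrt (2 * Real.pi))⁻¹ * Real.exp (-x ^ 2 / 2)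

/-- Standard normal cdf. -/
noncomputable def stdCdf (x : ℝ) : ℝ :=
  ∫ t in Set.Iic x, stdPdf t

/-- Bivariate standard normal density with correlation `ρ`. -/
noncomputable def pdf2 (x₁ x₂ ρ : ℝ) : ℝ :=
  (2 * Real.pi * Real.sqrt (1 - ρ ^ 2))⁻¹ *
    Real.exp (-(x₁ ^ 2 - 2 * ρ * x₁ * x₂ + x₂ ^ 2) / (2 * (1 - ρ ^ 2)))

/-- Bivariate standard normal cdf. -/
noncomputable def cdf2 (a b ρ : ℝ) : ℝ :=
  ∫ x₁ in Set.Iic a, ∫ x₂ in Set.Iic b, pdf2 x₁ x₂ ρ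

/-- The BC-case bridge function `F(r,Δ) = 4Φ₂(Δ,0;r/√2) − 2Φ(Δ)`. -/
noncomputable def FBC (r Δ : ℝ) : ℝ :=
  4 * cdf2 Δ 0 (r / Real.sqrt 2) - 2 * stdCdf Δ

lemma stdPdf_eq : stdPdf = fun x => (Real.sqrt (2 * Real.pi))⁻¹ * Real.exp (-(1/2 : ℝ) * x ^ 2) := by
  funext x; unfold stdPdf; ring_nf

lemma continuous_stdPdf : Continuous stdPdf := by
  unfold stdPdf; continuity

lemma integrable_stdPdf : Integrable stdPdf := by
  rw [stdPdf_eq]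
  exact (integrable_exp_neg_mul_sq (by norm_num)).const_mul _

lemma stdPdf_nonneg (x : ℝ) : 0 ≤ stdPdf x := by
  unfold stdPdf; positivity

lemma stdPdf_le (x : ℝ) : stdPdf x ≤ (Real.sqrt (2 * Real.pi))⁻¹ := by
  unfold stdPdf
  have h1 : Real.exp (-x ^ 2 / 2) ≤ 1 := Real.exp_le_one_iff.2 (by nlinarith [sq_nonneg x])
  have h2 : (0:ℝ) ≤ (Real.sqrt (2 * Real.pi))⁻¹ := by positivity
  calc (Real.sqrt (2 * Real.pi))⁻¹ * Real.exp (-x ^ 2 / 2)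
      ≤ (Real.sqrt (2 * Real.pi))⁻¹ * 1 := by nlinarith [Real.exp_pos (-x^2/2)]
    _ = _ := mul_one _

lemma hasDerivAt_stdCdf (x : ℝ) : HasDerivAt stdCdf (stdPdf x) x := by
  have key : stdCdf = fun y => (∫ t in Set.Iic (0:ℝ), stdPdf t) + ∫ t in (0:ℝ)..y, stdPdf t := by
    funext y
    have := intervalIntegral.integral_Iic_sub_Iic (f := stdPdf) (μ := volume)
      (a := (0:ℝ)) (b := y) integrable_stdPdf.integrableOn integrable_stdPdf.integrableOn
    unfold stdCdf
    linarith [this]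
  rw [key]
  exact (intervalIntegral.integral_hasDerivAt_right
    integrable_stdPdf.intervalIntegrable
    continuous_stdPdf.aestronglyMeasurable.stronglyMeasurableAtFilter
    continuous_stdPdf.continuousAt).const_add _

lemma continuous_stdCdf : Continuous stdCdf :=
  continuous_iff_continuousAt.2 fun x => (hasDerivAt_stdCdf x).continuousAt

lemma stdCdf_nonneg (x : ℝ) : 0 ≤ stdCdf x :=
  integral_nonneg fun t => stdPdf_nonneg t

lemma stdCdf_le (x : ℝ) : stdCdf x ≤ ∫ t, stdPdf t :=
  setIntegral_le_integral integrable_stdPdf (Filter.Eventually.of_forall stdPdf_nonneg)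

/-- Gaussian antiderivative on a half-line. -/
lemma integral_x_exp_Iic (a Δ : ℝ) (ha : 0 < a) :
    ∫ x in Set.Iic Δ, x * Real.exp (-(a/2) * x ^ 2)
      = -(1/a) * Real.exp (-(a/2) * Δ ^ 2) := by
  have hderiv : ∀ x ∈ Set.Iic Δ, HasDerivAt (fun x => -(1/a) * Real.exp (-(a/2) * x ^ 2))
      (x * Real.exp (-(a/2) * x ^ 2)) x := by
    intro x _
    have h1 : HasDerivAt (fun x : ℝ => -(a/2) * x ^ 2) (-(a/2) * (2 * x)) x := by
      simpa using ((hasDerivAt_pow 2 x).const_mul (-(a/2)))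
    have h2 := (h1.exp).const_mul (-(1/a))
    refine h2.congr_deriv (Eq.symm ?_)
    field_simp
  have hint : IntegrableOn (fun x => x * Real.exp (-(a/2) * x ^ 2)) (Set.Iic Δ) :=
    (integrable_mul_exp_neg_mul_sq (by linarith : 0 < a/2)).integrableOn
  have htends : Tendsto (fun x => -(1/a) * Real.exp (-(a/2) * x ^ 2)) atBot (nhds 0) := by
    have hsq : Tendsto (fun x : ℝ => x ^ 2) atBot atTop := by
      have := (tendsto_pow_atTop (n := 2) two_ne_zero).comp
        (tendsto_neg_atBot_atTop (G := ℝ))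
      simpa [Function.comp_def] using this
    have h3 : Tendsto (fun x : ℝ => -(a/2) * x ^ 2) atBot atBot :=
      (tendsto_const_mul_atBot_of_neg (by linarith)).2 hsq
    have h4 := Real.tendsto_exp_atBot.comp h3
    have h5 := h4.const_mul (-(1/a))
    simpa using h5
  have := integral_Iic_of_hasDerivAt_of_tendsto' hderiv hint htends
  rw [this]; ring

/-- Change of variables for `Iic` integrals under an affine map. -/
lemma setIntegral_Iic_comp_affine (f : ℝ → ℝ) (m σ b : ℝ) (hσ : 0 < σ) :
    ∫ x in Set.Iic b, f ((x - m)/σ) = σ * ∫ y in Set.Iic ((b - m)/σ), f y := by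
  rw [← integral_indicator measurableSet_Iic, ← integral_indicator measurableSet_Iic]
  have key : ∀ x, (Set.Iic b).indicator (fun x => f ((x - m)/σ)) x
      = (Set.Iic ((b - m)/σ)).indicator f ((x - m)/σ) := by
    intro x
    have hiff : (x - m)/σ ≤ (b - m)/σ ↔ x ≤ b := by
      rw [div_le_div_iff_of_pos_right hσ]; constructor <;> intro <;> linarith
    by_cases h : x ≤ b
    · simp [Set.indicator, Set.mem_Iic, h, hiff.2 h]
    · have h' : ¬ ((x - m)/σ ≤ (b - m)/σ) := fun hc => h (hiff.1 hc)
      simp [Set.indicator, Set.mem_Iic, h, h']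
  simp_rw [key]
  have htr := integral_sub_right_eq_self (μ := volume)
    (fun x => (Set.Iic ((b - m)/σ)).indicator f (x/σ)) m
  rw [show (fun x => (Set.Iic ((b - m)/σ)).indicator f ((x - m)/σ))
      = (fun x => (Set.Iic ((b - m)/σ)).indicator f ((x - m)/σ)) from rfl]
  rw [show (∫ x, (Set.Iic ((b - m)/σ)).indicator f ((x - m)/σ))
      = ∫ x, (Set.Iic ((b - m)/σ)).indicator f (x/σ) from htr]
  rw [MeasureTheory.Measure.integral_comp_div ((Set.Iic ((b - m)/σ)).indicator f) σ]
  rw [abs_of_pos hσ, smul_eq_mul]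



lemma pdf2_decomp (x₁ x₂ ρ : ℝ) (hρ : ρ ^ 2 < 1) :
    pdf2 x₁ x₂ ρ = stdPdf x₁ *
      ((Real.sqrt (1 - ρ ^ 2))⁻¹ * stdPdf ((x₂ - ρ * x₁) / Real.sqrt (1 - ρ ^ 2))) := by
  set σ := Real.sqrt (1 - ρ ^ 2) with hσdef
  have hσpos : 0 < σ := Real.sqrt_pos.2 (by linarith)
  have hσ2 : σ ^ 2 = 1 - ρ ^ 2 := Real.sq_sqrt (by linarith)
  have h2π : Real.sqrt (2 * Real.pi) * Real.sqrt (2 * Real.pi) = 2 * Real.pi :=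
    Real.mul_self_sqrt (by positivity)
  have h1 : (1:ℝ) - ρ ^ 2 ≠ 0 := by nlinarith
  have hexp : -(x₁ ^ 2 - 2 * ρ * x₁ * x₂ + x₂ ^ 2) / (2 * (1 - ρ ^ 2))
      = -x₁ ^ 2 / 2 + -((x₂ - ρ * x₁) / σ) ^ 2 / 2 := by
    rw [div_pow, hσ2]
    field_simp
    ring
  unfold pdf2 stdPdf
  rw [← hσdef, hexp, Real.exp_add]
  have hπ : (0:ℝ) < π := Real.pi_pos
  have hs2π : Real.sqrt (2 * Real.pi) ≠ 0 := by positivity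
  have ha : Real.sqrt 2 ^ 2 = 2 := Real.sq_sqrt (by norm_num)
  have hb : Real.sqrt π ^ 2 = π := Real.sq_sqrt hπ.le
  have hc : Real.sqrt (2 * π) ^ 2 = 2 * π := Real.sq_sqrt (by positivity)
  field_simp
  rw [hc] at *

lemma inner_integral (ρ x₁ : ℝ) (hρ : ρ ^ 2 < 1) :
    ∫ x₂ in Set.Iic (0:ℝ), pdf2 x₁ x₂ ρ
      = stdPdf x₁ * stdCdf (-ρ / Real.sqrt (1 - ρ ^ 2) * x₁) := by
  have hσpos : 0 < Real.sqrt (1 - ρ ^ 2) := Real.sqrt_pos.2 (by linarith)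
  set σ := Real.sqrt (1 - ρ ^ 2) with hσdef
  have hpt : ∀ x₂, pdf2 x₁ x₂ ρ = stdPdf x₁ * (σ⁻¹ * stdPdf ((x₂ - ρ * x₁) / σ)) :=
    fun x₂ => pdf2_decomp x₁ x₂ ρ hρ
  simp_rw [hpt]
  rw [integral_const_mul, integral_const_mul]
  congr 1
  have := setIntegral_Iic_comp_affine stdPdf (ρ * x₁) σ 0 hσpos
  rw [show (∫ x₂ in Set.Iic (0:ℝ), stdPdf ((x₂ - ρ * x₁) / σ))
      = σ * ∫ y in Set.Iic ((0 - ρ * x₁) / σ), stdPdf y from this]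
  rw [show (0 - ρ * x₁) / σ = -ρ / σ * x₁ by ring]
  unfold stdCdf
  field_simp

noncomputable def gBC (Δ c : ℝ) : ℝ := ∫ x in Set.Iic Δ, stdPdf x * stdCdf (c * x)

lemma cdf2_eq (Δ ρ : ℝ) (hρ : ρ ^ 2 < 1) :
    cdf2 Δ 0 ρ = gBC Δ (-ρ / Real.sqrt (1 - ρ ^ 2)) := by
  unfold cdf2 gBC
  exact setIntegral_congr_fun measurableSet_Iic fun x₁ _ => inner_integral ρ x₁ hρ

lemma bound_integrable' : Integrable (fun x : ℝ => stdPdf x * ((Real.sqrt (2 * π))⁻¹ * |x|)) := by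
  have h := ((integrable_mul_exp_neg_mul_sq (by norm_num : (0:ℝ) < 1/2)).abs).const_mul
    ((Real.sqrt (2 * π))⁻¹ * (Real.sqrt (2 * π))⁻¹)
  refine h.congr (Filter.Eventually.of_forall fun x => ?_)
  unfold stdPdf
  simp only
  rw [abs_mul, abs_of_pos (Real.exp_pos _)]
  ring_nf

lemma hasDerivAt_gBC (Δ c₀ : ℝ) :
    HasDerivAt (gBC Δ)
      (-(2 * π)⁻¹ * (1 + c₀ ^ 2)⁻¹ * Real.exp (-((1 + c₀ ^ 2) / 2) * Δ ^ 2)) c₀ := by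
  have hcontF : ∀ c : ℝ, Continuous fun x => stdPdf x * stdCdf (c * x) := fun c =>
    continuous_stdPdf.mul (continuous_stdCdf.comp (continuous_const.mul continuous_id))
  have hcontF' : Continuous fun x : ℝ => stdPdf x * (stdPdf (c₀ * x) * x) :=
    continuous_stdPdf.mul
      ((continuous_stdPdf.comp (continuous_const.mul continuous_id)).mul continuous_id)
  set C := ∫ t, stdPdf t with hC
  have hCnn : 0 ≤ C := integral_nonneg stdPdf_nonneg
  have key := hasDerivAt_integral_of_dominated_loc_of_deriv_le
    (μ := volume.restrict (Set.Iic Δ)) (x₀ := c₀)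
    (F := fun c x => stdPdf x * stdCdf (c * x))
    (F' := fun c x => stdPdf x * (stdPdf (c * x) * x))
    (bound := fun x => stdPdf x * ((Real.sqrt (2 * π))⁻¹ * |x|))
    (Metric.ball_mem_nhds c₀ one_pos)
    (Filter.Eventually.of_forall fun c => (hcontF c).aestronglyMeasurable.restrict)
    ?_ hcontF'.aestronglyMeasurable.restrict ?_ bound_integrable'.restrict ?_
  · obtain ⟨-, hd⟩ := key
    have hval : (∫ x in Set.Iic Δ, stdPdf x * (stdPdf (c₀ * x) * x))
        = -(2 * π)⁻¹ * (1 + c₀ ^ 2)⁻¹ * Real.exp (-((1 + c₀ ^ 2) / 2) * Δ ^ 2) := by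
      have h2π : Real.sqrt (2 * π) * Real.sqrt (2 * π) = 2 * π :=
        Real.mul_self_sqrt (by positivity)
      have hpt : ∀ x : ℝ, stdPdf x * (stdPdf (c₀ * x) * x)
          = (2 * π)⁻¹ * (x * Real.exp (-((1 + c₀ ^ 2) / 2) * x ^ 2)) := by
        intro x
        unfold stdPdf
        rw [show -((1 + c₀ ^ 2) / 2) * x ^ 2 = -x ^ 2 / 2 + -(c₀ * x) ^ 2 / 2 by ring,
          Real.exp_add]
        rw [show ((2 * π : ℝ))⁻¹ = (Real.sqrt (2 * π))⁻¹ * (Real.sqrt (2 * π))⁻¹ by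
          rw [← mul_inv, h2π]]
        ring
      simp_rw [hpt]
      rw [integral_const_mul, integral_x_exp_Iic (1 + c₀ ^ 2) Δ (by positivity)]
      ring
    rw [hval] at hd
    exact hd
  · -- integrability of F c₀
    refine Integrable.mono (g := fun x => stdPdf x * C)
      ((integrable_stdPdf.mul_const C).restrict)
      ((hcontF c₀).aestronglyMeasurable.restrict) ?_
    refine Filter.Eventually.of_forall fun x => ?_
    rw [Real.norm_eq_abs, Real.norm_eq_abs,
      abs_of_nonneg (mul_nonneg (stdPdf_nonneg x) (stdCdf_nonneg _)),
      abs_of_nonneg (mul_nonneg (stdPdf_nonneg x) hCnn)]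
    exact mul_le_mul_of_nonneg_left (stdCdf_le _) (stdPdf_nonneg x)
  · -- bound
    refine Filter.Eventually.of_forall fun x => fun c _ => ?_
    rw [Real.norm_eq_abs, abs_mul, abs_mul, abs_of_nonneg (stdPdf_nonneg x),
      abs_of_nonneg (stdPdf_nonneg (c * x))]
    exact mul_le_mul_of_nonneg_left
      (mul_le_mul_of_nonneg_right (stdPdf_le _) (abs_nonneg x)) (stdPdf_nonneg x)
  · -- differentiability
    refine Filter.Eventually.of_forall fun x => fun c _ => ?_
    have h1 : HasDerivAt (fun c : ℝ => c * x) x c := hasDerivAt_mul_const x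
    have h2 := (hasDerivAt_stdCdf (c * x)).comp c h1
    exact h2.const_mul (stdPdf x)


noncomputable def cfun (r : ℝ) : ℝ := -r / Real.sqrt (2 - r ^ 2)

noncomputable def hfun (Δ r : ℝ) : ℝ :=
  2 / π * (Real.sqrt (2 - r ^ 2))⁻¹ * Real.exp (-Δ ^ 2 / (2 - r ^ 2))

lemma sq_div_sqrt_two (r : ℝ) : (r / Real.sqrt 2) ^ 2 = r ^ 2 / 2 := by
  rw [div_pow, Real.sq_sqrt (by norm_num : (0:ℝ) ≤ 2)]

lemma c_eq (r : ℝ) (hr : r ∈ Set.Ioo (-1:ℝ) 1) :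
    -(r / Real.sqrt 2) / Real.sqrt (1 - (r / Real.sqrt 2) ^ 2) = cfun r := by
  have h2r : (0:ℝ) < 2 - r ^ 2 := by nlinarith [hr.1, hr.2]
  rw [sq_div_sqrt_two, show (1 : ℝ) - r ^ 2 / 2 = (2 - r ^ 2) / 2 by ring,
    Real.sqrt_div h2r.le]
  unfold cfun
  have hs : 0 < Real.sqrt (2 - r ^ 2) := Real.sqrt_pos.2 h2r
  have h2 : 0 < Real.sqrt 2 := Real.sqrt_pos.2 (by norm_num)
  field_simp

lemma FBC_eq (Δ r : ℝ) (hr : r ∈ Set.Ioo (-1:ℝ) 1) :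
    FBC r Δ = 4 * gBC Δ (cfun r) - 2 * stdCdf Δ := by
  have hρ : (r / Real.sqrt 2) ^ 2 < 1 := by
    rw [sq_div_sqrt_two]; nlinarith [hr.1, hr.2]
  unfold FBC
  rw [cdf2_eq Δ _ hρ, show -(r / Real.sqrt 2) / Real.sqrt (1 - (r / Real.sqrt 2) ^ 2)
    = cfun r from c_eq r hr]

lemma hasDerivAt_cfun (r : ℝ) (hr : r ∈ Set.Ioo (-1:ℝ) 1) :
    HasDerivAt cfun (-2 / Real.sqrt (2 - r ^ 2) ^ 3) r := by
  have h2r : (0:ℝ) < 2 - r ^ 2 := by nlinarith [hr.1, hr.2]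
  have hs : 0 < Real.sqrt (2 - r ^ 2) := Real.sqrt_pos.2 h2r
  have hs2 : Real.sqrt (2 - r ^ 2) ^ 2 = 2 - r ^ 2 := Real.sq_sqrt h2r.le
  have hq : HasDerivAt (fun r : ℝ => 2 - r ^ 2) (-(2 * r)) r := by
    simpa using ((hasDerivAt_pow 2 r).const_sub 2)
  have hsq : HasDerivAt (fun r : ℝ => Real.sqrt (2 - r ^ 2))
      (1 / (2 * Real.sqrt (2 - r ^ 2)) * -(2 * r)) r :=
    (Real.hasDerivAt_sqrt h2r.ne').comp r hq
  have hnum : HasDerivAt (fun r : ℝ => -r) (-1) r := (hasDerivAt_id r).neg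
  have hdiv := hnum.div hsq (ne_of_gt hs)
  refine hdiv.congr_deriv (Eq.symm ?_)
  rw [hs2]
  field_simp
  linear_combination (Real.sqrt (2 - r ^ 2) ^ 2 + 2) * hs2

lemma hasDerivAt_FBC (Δ r : ℝ) (hr : r ∈ Set.Ioo (-1:ℝ) 1) :
    HasDerivAt (fun r => FBC r Δ) (hfun Δ r) r := by
  have h2r : (0:ℝ) < 2 - r ^ 2 := by nlinarith [hr.1, hr.2]
  have hs : 0 < Real.sqrt (2 - r ^ 2) := Real.sqrt_pos.2 h2r
  have hs2 : Real.sqrt (2 - r ^ 2) ^ 2 = 2 - r ^ 2 := Real.sq_sqrt h2r.le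
  set s := Real.sqrt (2 - r ^ 2) with hsdef
  have hc := hasDerivAt_cfun r hr
  have hg := hasDerivAt_gBC Δ (cfun r)
  have hcomp := (hg.comp r hc).const_mul 4 |>.sub_const (2 * stdCdf Δ)
  have heq : (fun r => FBC r Δ) =ᶠ[nhds r] fun r => 4 * gBC Δ (cfun r) - 2 * stdCdf Δ := by
    filter_upwards [isOpen_Ioo.mem_nhds hr] with y hy
    exact FBC_eq Δ y hy
  rw [heq.hasDerivAt_iff]
  have h1c : 1 + cfun r ^ 2 = 2 / s ^ 2 := by
    unfold cfun
    rw [← hsdef, div_pow, hs2, neg_pow]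
    field_simp
    ring
  have hval : 4 * (-(2 * π)⁻¹ * (1 + cfun r ^ 2)⁻¹ *
      Real.exp (-((1 + cfun r ^ 2) / 2) * Δ ^ 2) * (-2 / s ^ 3)) = hfun Δ r := by
    rw [h1c]
    unfold hfun
    rw [← hsdef]
    rw [show -((2 / s ^ 2) / 2) * Δ ^ 2 = -Δ ^ 2 / s ^ 2 by ring, hs2]
    have hπ : (0:ℝ) < π := Real.pi_pos
    set E := Real.exp (-Δ ^ 2 / (2 - r ^ 2)) with hE
    field_simp
    linear_combination (-4 * E) * hs2
  rw [← hval]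
  exact hcomp

lemma pdf2_val (Δ r : ℝ) (hr : r ∈ Set.Ioo (-1:ℝ) 1) :
    pdf2 Δ 0 (r / Real.sqrt 2)
      = Real.sqrt 2 * (2 * π * Real.sqrt (2 - r ^ 2))⁻¹ * Real.exp (-Δ ^ 2 / (2 - r ^ 2)) := by
  have h2r : (0:ℝ) < 2 - r ^ 2 := by nlinarith [hr.1, hr.2]
  have hs : 0 < Real.sqrt (2 - r ^ 2) := Real.sqrt_pos.2 h2r
  have h2 : (0:ℝ) < Real.sqrt 2 := Real.sqrt_pos.2 (by norm_num)
  have h22 : Real.sqrt 2 * Real.sqrt 2 = 2 := Real.mul_self_sqrt (by norm_num)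
  have hπ : (0:ℝ) < π := Real.pi_pos
  unfold pdf2
  rw [sq_div_sqrt_two, show (1:ℝ) - r ^ 2 / 2 = (2 - r ^ 2) / 2 by ring,
    Real.sqrt_div h2r.le]
  rw [show -(Δ ^ 2 - 2 * (r / Real.sqrt 2) * Δ * 0 + 0 ^ 2) / (2 * ((2 - r ^ 2) / 2))
      = -Δ ^ 2 / (2 - r ^ 2) by ring]
  congr 1
  field_simp

lemma hasDerivAt_hfun (Δ r : ℝ) (hr : r ∈ Set.Ioo (-1:ℝ) 1) :
    HasDerivAt (hfun Δ)
      (pdf2 Δ 0 (r / Real.sqrt 2) * (2 * Real.sqrt 2 * r / (2 - r ^ 2) ^ 2) *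
        (2 - r ^ 2 - 2 * Δ ^ 2)) r := by
  have h2r : (0:ℝ) < 2 - r ^ 2 := by nlinarith [hr.1, hr.2]
  have hs : 0 < Real.sqrt (2 - r ^ 2) := Real.sqrt_pos.2 h2r
  have hs2 : Real.sqrt (2 - r ^ 2) ^ 2 = 2 - r ^ 2 := Real.sq_sqrt h2r.le
  have h2 : (0:ℝ) < Real.sqrt 2 := Real.sqrt_pos.2 (by norm_num)
  have h22 : Real.sqrt 2 * Real.sqrt 2 = 2 := Real.mul_self_sqrt (by norm_num)
  have hπ : (0:ℝ) < π := Real.pi_pos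
  set s := Real.sqrt (2 - r ^ 2) with hsdef
  have hq : HasDerivAt (fun r : ℝ => 2 - r ^ 2) (-(2 * r)) r := by
    simpa using ((hasDerivAt_pow 2 r).const_sub 2)
  have hsq : HasDerivAt (fun r : ℝ => Real.sqrt (2 - r ^ 2)) (1 / (2 * s) * -(2 * r)) r :=
    (Real.hasDerivAt_sqrt h2r.ne').comp r hq
  have hu : HasDerivAt (fun r : ℝ => (Real.sqrt (2 - r ^ 2))⁻¹)
      (-(1 / (2 * s) * -(2 * r)) / s ^ 2) r := hsq.inv (ne_of_gt hs)
  have hw : HasDerivAt (fun r : ℝ => -Δ ^ 2 / (2 - r ^ 2))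
      ((0 * (2 - r ^ 2) - -Δ ^ 2 * -(2 * r)) / (2 - r ^ 2) ^ 2) r :=
    (hasDerivAt_const r (-Δ ^ 2)).div hq h2r.ne'
  have hv := hw.exp
  have hD := (hu.const_mul (2 / π)).mul hv
  have hfn : HasDerivAt (hfun Δ)
      ((2 / π * (-(1 / (2 * s) * -(2 * r)) / s ^ 2)) * Real.exp (-Δ ^ 2 / (2 - r ^ 2))
        + (2 / π * s⁻¹) * (Real.exp (-Δ ^ 2 / (2 - r ^ 2)) *
            ((0 * (2 - r ^ 2) - -Δ ^ 2 * -(2 * r)) / (2 - r ^ 2) ^ 2))) r := by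
    unfold hfun
    exact hD
  have hval : ((2 / π * (-(1 / (2 * s) * -(2 * r)) / s ^ 2)) * Real.exp (-Δ ^ 2 / (2 - r ^ 2))
        + (2 / π * s⁻¹) * (Real.exp (-Δ ^ 2 / (2 - r ^ 2)) *
            ((0 * (2 - r ^ 2) - -Δ ^ 2 * -(2 * r)) / (2 - r ^ 2) ^ 2)))
      = pdf2 Δ 0 (r / Real.sqrt 2) * (2 * Real.sqrt 2 * r / (2 - r ^ 2) ^ 2) *
        (2 - r ^ 2 - 2 * Δ ^ 2) := by
    rw [pdf2_val Δ r hr, ← hsdef]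
    set E := Real.exp (-Δ ^ 2 / (2 - r ^ 2)) with hE
    field_simp
    ring_nf
    linear_combination (-2 * E * r * (2 - r ^ 2)) * hs2 -
      (s ^ 2 * r * E * (2 - r ^ 2 - 2 * Δ ^ 2)) * h22
  rw [← hval]
  exact hfn

/-- The BC bridge function is twice differentiable in `r` on `(−1,1)`, with second
derivative `φ₂(Δ,0;r/√2) · (2√2·r/(2−r²)²) · (2 − r² − 2Δ²)`. -/
theorem FBC_second_deriv_r (Δ : ℝ) :
    (∀ r ∈ Set.Ioo (-1 : ℝ) 1, DifferentiableAt ℝ (fun r => FBC r Δ) r) ∧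
    (∀ r ∈ Set.Ioo (-1 : ℝ) 1,
      HasDerivAt (deriv fun r => FBC r Δ)
        (pdf2 Δ 0 (r / Real.sqrt 2) * (2 * Real.sqrt 2 * r / (2 - r ^ 2) ^ 2) *
          (2 - r ^ 2 - 2 * Δ ^ 2)) r) := by
  constructor
  · exact fun r hr => (hasDerivAt_FBC Δ r hr).differentiableAt
  · intro r hr
    have heq : (deriv fun r => FBC r Δ) =ᶠ[nhds r] hfun Δ := by
      filter_upwards [isOpen_Ioo.mem_nhds hr] with y hy
      exact (hasDerivAt_FBC Δ y hy).deriv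
    rw [heq.hasDerivAt_iff]
    exact hasDerivAt_hfun Δ r hr
end

section
/- For every r ∈ (−1,1) and Δ ∈ ℝ, ∫_{−∞}^0 φ₃(−Δ, t, 0; Σ₃(r)) dt = φ₂(−Δ, 0; r/√2) · Φ( Δ·√( 2(1−r²)/(2−r²) ) ). -/
open Real MeasureTheory Matrix

/-- The 3×3 correlation matrix Σ₃(r). -/
noncomputable def Sigma3 (r : ℝ) : Matrix (Fin 3) (Fin 3) ℝ :=
  !![1, 1 / Real.sqrt 2, r / Real.sqrt 2;
     1 / Real.sqrt 2, 1, r;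
     r / Real.sqrt 2, r, 1]

/-- Trivariate normal density with covariance Σ₃(r):
`(2π)^{-3/2} (det Σ₃(r))^{-1/2} exp(−½ xᵀ Σ₃(r)⁻¹ x)`. -/
noncomputable def pdf3 (r : ℝ) (x : Fin 3 → ℝ) : ℝ :=
  (Real.sqrt ((2 * Real.pi) ^ 3 * (Sigma3 r).det))⁻¹ *
    Real.exp (-(1 / 2) * (x ⬝ᵥ (Sigma3 r)⁻¹.mulVec x))

/-- Trivariate normal cdf with covariance Σ₃(r). -/
noncomputable def cdf3 (a b c r : ℝ) : ℝ :=
  ∫ x₁ in Set.Iic a, ∫ x₂ in Set.Iic b, ∫ x₃ in Set.Iic c, pdf3 r ![x₁, x₂, x₃]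

/-- The TC-case bridge function `F(r,Δ) = −2Φ₂(−Δ,0;1/√2) + 4Φ₃(−Δ,0,0;Σ₃(r))`. -/
noncomputable def FTC (r Δ : ℝ) : ℝ :=
  -2 * cdf2 (-Δ) 0 (1 / Real.sqrt 2) + 4 * cdf3 (-Δ) 0 0 r

lemma eq_of_sq_eq {a b : ℝ} (ha : 0 ≤ a) (hb : 0 ≤ b) (h : a ^ 2 = b ^ 2) : a = b := by
  nlinarith

lemma stdPdf_integral_Iic_comp (c b : ℝ) (hc : 0 < c) :
    ∫ t in Set.Iic (0 : ℝ), stdPdf (c * t + b) = c⁻¹ * stdCdf b := by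
  rw [stdCdf, ← integral_indicator (measurableSet_Iic (a := (0:ℝ))),
    ← integral_indicator (measurableSet_Iic (a := b))]
  have key : ∀ x : ℝ, (Set.Iic (0:ℝ)).indicator (fun t => stdPdf (c * t + b)) x
      = (Set.Iic b).indicator stdPdf (c * x + b) := by
    intro x
    simp only [Set.indicator_apply, Set.mem_Iic]
    have hiff : c * x + b ≤ b ↔ x ≤ 0 := by
      constructor <;> intro h <;> nlinarith
    simp only [hiff]
  simp_rw [key]
  have h1 := MeasureTheory.Measure.integral_comp_mul_left
    (fun y : ℝ => (Set.Iic b).indicator stdPdf (y + b)) c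
  rw [h1, integral_add_right_eq_self (fun y => (Set.Iic b).indicator stdPdf y) b,
    abs_of_pos (inv_pos.mpr hc), smul_eq_mul]

lemma Sigma3_det (r : ℝ) : (Sigma3 r).det = (1 - r ^ 2) / 2 := by
  have h2 : Real.sqrt 2 * Real.sqrt 2 = 2 := Real.mul_self_sqrt (by norm_num)
  have h2' : Real.sqrt 2 ≠ 0 := by positivity
  simp only [Sigma3, Matrix.det_fin_three, Matrix.cons_val', Matrix.cons_val_zero,
    Matrix.cons_val_one, Matrix.head_cons, Matrix.head_fin_const, Matrix.empty_val',
    Matrix.cons_val_fin_one, Matrix.cons_val_two, Matrix.tail_cons, Matrix.of_apply, Matrix.cons_val]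
  field_simp
  nlinarith [h2, sq_nonneg r]

lemma Sigma3_inv (r : ℝ) (hr : r ∈ Set.Ioo (-1 : ℝ) 1) :
    (Sigma3 r)⁻¹ = !![2, -Real.sqrt 2, 0;
                      -Real.sqrt 2, (2 - r ^ 2) / (1 - r ^ 2), -r / (1 - r ^ 2);
                      0, -r / (1 - r ^ 2), (1 - r ^ 2)⁻¹] := by
  have h1 : (0:ℝ) < 1 - r ^ 2 := by nlinarith [hr.1, hr.2]
  have h2 : Real.sqrt 2 * Real.sqrt 2 = 2 := Real.mul_self_sqrt (by norm_num)
  have h2' : Real.sqrt 2 ≠ 0 := by positivity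
  apply Matrix.inv_eq_right_inv
  ext i j
  fin_cases i <;> fin_cases j <;>
    · simp only [Sigma3, Matrix.mul_apply, Fin.sum_univ_three, Matrix.cons_val', Matrix.cons_val_zero,
        Matrix.cons_val_one, Matrix.head_cons, Matrix.empty_val', Matrix.cons_val_fin_one,
        Matrix.cons_val_two, Matrix.tail_cons, Matrix.one_apply, Fin.mk_zero, Fin.mk_one,
        Matrix.head_fin_const, Matrix.of_apply, Matrix.cons_val]
      norm_num [Fin.ext_iff]
      all_goals field_simp
      all_goals ring_nf
      all_goals simp only [Real.sq_sqrt (by norm_num : (0:ℝ) ≤ 2)]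
      all_goals ring_nf

/-- Marginalization identity:
`∫_{−∞}^0 φ₃(−Δ,t,0;Σ₃(r)) dt = φ₂(−Δ,0;r/√2)·Φ(Δ·√(2(1−r²)/(2−r²)))`. -/
theorem pdf3_partial_integral_middle (r : ℝ) (hr : r ∈ Set.Ioo (-1 : ℝ) 1) (Δ : ℝ) :
    ∫ t in Set.Iic (0 : ℝ), pdf3 r ![-Δ, t, 0] =
      pdf2 (-Δ) 0 (r / Real.sqrt 2) *
        stdCdf (Δ * Real.sqrt (2 * (1 - r ^ 2) / (2 - r ^ 2))) := by
  obtain ⟨hr1, hr2⟩ := hr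
  have h1 : (0:ℝ) < 1 - r ^ 2 := by nlinarith
  have h2 : (0:ℝ) < 2 - r ^ 2 := by nlinarith
  have hπ : (0:ℝ) < Real.pi := Real.pi_pos
  set a : ℝ := (2 - r ^ 2) / (1 - r ^ 2) with ha_def
  have ha : 0 < a := div_pos h2 h1
  set c : ℝ := Real.sqrt a with hc_def
  have hc : 0 < c := Real.sqrt_pos.mpr ha
  set b : ℝ := Δ * Real.sqrt (2 * (1 - r ^ 2) / (2 - r ^ 2)) with hb_def
  have hca : c ^ 2 = a := Real.sq_sqrt ha.le
  have hcb : c * b = Real.sqrt 2 * Δ := by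
    rw [hb_def, hc_def, ← mul_assoc, mul_comm (Real.sqrt a) Δ, mul_assoc,
      ← Real.sqrt_mul ha.le, ha_def]
    rw [show (2 - r ^ 2) / (1 - r ^ 2) * (2 * (1 - r ^ 2) / (2 - r ^ 2)) = 2 by
      field_simp]
    ring
  have hb2 : b ^ 2 = Δ ^ 2 * (2 * (1 - r ^ 2) / (2 - r ^ 2)) := by
    rw [hb_def, mul_pow, Real.sq_sqrt (by positivity)]
  have hρ : (r / Real.sqrt 2) ^ 2 = r ^ 2 / 2 := by
    rw [div_pow, Real.sq_sqrt (by norm_num : (0:ℝ) ≤ 2)]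
  have key : ∀ t : ℝ, pdf3 r ![-Δ, t, 0] =
      (pdf2 (-Δ) 0 (r / Real.sqrt 2) * c) * stdPdf (c * t + b) := by
    intro t
    rw [pdf3, pdf2, stdPdf, Sigma3_det, Sigma3_inv r ⟨hr1, hr2⟩, hρ]
    have hQ : (![-Δ, t, 0] ⬝ᵥ
        (!![2, -Real.sqrt 2, 0;
            -Real.sqrt 2, (2 - r ^ 2) / (1 - r ^ 2), -r / (1 - r ^ 2);
            0, -r / (1 - r ^ 2), (1 - r ^ 2)⁻¹]).mulVec ![-Δ, t, 0])
        = 2 * Δ ^ 2 + 2 * (Real.sqrt 2 * Δ) * t + a * t ^ 2 := by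
      simp [Matrix.mulVec, dotProduct, Fin.sum_univ_three, ha_def]
      ring
    have hsq : (c * t + b) ^ 2
        = a * t ^ 2 + 2 * (Real.sqrt 2 * Δ) * t + Δ ^ 2 * (2 * (1 - r ^ 2) / (2 - r ^ 2)) := by
      have : (c * t + b) ^ 2 = c ^ 2 * t ^ 2 + 2 * (c * b) * t + b ^ 2 := by ring
      rw [this, hca, hcb, hb2]
    have hexp : -(1/2) * (2 * Δ ^ 2 + 2 * (Real.sqrt 2 * Δ) * t + a * t ^ 2)
        = -((-Δ) ^ 2 - 2 * (r / Real.sqrt 2) * (-Δ) * 0 + 0 ^ 2) / (2 * (1 - r ^ 2 / 2))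
          + -(c * t + b) ^ 2 / 2 := by
      rw [hsq, ha_def]
      field_simp
      ring
    have hconst : (Real.sqrt ((2 * Real.pi) ^ 3 * ((1 - r ^ 2) / 2)))⁻¹
        = (2 * Real.pi * Real.sqrt (1 - r ^ 2 / 2))⁻¹ * c * (Real.sqrt (2 * Real.pi))⁻¹ := by
      apply eq_of_sq_eq (by positivity) (by positivity)
      have s1 : Real.sqrt ((2 * Real.pi) ^ 3 * ((1 - r ^ 2) / 2)) ^ 2
          = (2 * Real.pi) ^ 3 * ((1 - r ^ 2) / 2) := Real.sq_sqrt (by positivity)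
      have s2 : Real.sqrt (1 - r ^ 2 / 2) ^ 2 = 1 - r ^ 2 / 2 :=
        Real.sq_sqrt (by nlinarith)
      have s3 : Real.sqrt (2 * Real.pi) ^ 2 = 2 * Real.pi := Real.sq_sqrt (by positivity)
      have h12 : (0:ℝ) < 1 - r ^ 2 / 2 := by nlinarith
      have h12' : (0:ℝ) < 2 * Real.pi * Real.sqrt (1 - r ^ 2 / 2) := by positivity
      rw [inv_pow, s1,
        mul_pow ((2 * Real.pi * Real.sqrt (1 - r ^ 2 / 2))⁻¹ * c) ((Real.sqrt (2 * Real.pi))⁻¹),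
        mul_pow ((2 * Real.pi * Real.sqrt (1 - r ^ 2 / 2))⁻¹) c, inv_pow, inv_pow,
        mul_pow (2 * Real.pi) (Real.sqrt (1 - r ^ 2 / 2)), s2, s3, hca, ha_def]
      field_simp
    rw [hQ, hexp, Real.exp_add, hconst]
    ring
  simp_rw [key]
  rw [MeasureTheory.integral_const_mul, stdPdf_integral_Iic_comp c b hc,
    mul_assoc, ← mul_assoc c, mul_inv_cancel₀ hc.ne', one_mul]
end

section
/- For every r ∈ (−1,1) and Δ ∈ ℝ, ∫_{−∞}^{−Δ} φ₃(t, 0, 0; Σ₃(r)) dt = (1/(2π√(1−r²))) · Φ(−√2·Δ). -/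
open Real MeasureTheory Matrix

/-- Marginalization identity:
`∫_{−∞}^{−Δ} φ₃(t,0,0;Σ₃(r)) dt = (1/(2π√(1−r²)))·Φ(−√2·Δ)`. -/
theorem pdf3_partial_integral_first (r : ℝ) (hr : r ∈ Set.Ioo (-1 : ℝ) 1) (Δ : ℝ) :
    ∫ t in Set.Iic (-Δ), pdf3 r ![t, 0, 0] =
      (1 / (2 * Real.pi * Real.sqrt (1 - r ^ 2))) * stdCdf (-(Real.sqrt 2) * Δ) := by
  obtain ⟨hr1, hr2⟩ := hr
  have h1r : (0:ℝ) < 1 - r ^ 2 := by nlinarith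
  have hπ : (0:ℝ) < π := Real.pi_pos
  have h2 : Real.sqrt 2 ^ 2 = 2 := Real.sq_sqrt (by norm_num)
  have hs2 : (0:ℝ) < Real.sqrt 2 := Real.sqrt_pos.mpr (by norm_num)
  have hsr : (0:ℝ) < Real.sqrt (1 - r ^ 2) := Real.sqrt_pos.mpr h1r
  have hsr2 : Real.sqrt (1 - r ^ 2) ^ 2 = 1 - r ^ 2 := Real.sq_sqrt h1r.le
  have hs2π : (0:ℝ) < Real.sqrt (2 * π) := Real.sqrt_pos.mpr (by positivity)
  have hs2π2 : Real.sqrt (2 * π) ^ 2 = 2 * π := Real.sq_sqrt (by positivity)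
  have hdet : (Sigma3 r).det = (1 - r ^ 2) / 2 := by
    simp only [Sigma3, Matrix.det_fin_three, Matrix.cons_val', Matrix.cons_val_zero,
      Matrix.cons_val_one, Matrix.head_cons, Matrix.empty_val', Matrix.cons_val_fin_one,
      Matrix.head_fin_const, Matrix.cons_val_two, Matrix.tail_cons, Matrix.head_fin_const,
      Matrix.of_apply]
    field_simp
    nlinarith [h2, hs2]
  have hdet0 : (Sigma3 r).det ≠ 0 := by rw [hdet]; positivity
  have hquad : ∀ t : ℝ, (![t, 0, 0] ⬝ᵥ (Sigma3 r)⁻¹.mulVec ![t, 0, 0]) = 2 * t ^ 2 := by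
    intro t
    rw [Matrix.inv_def, hdet]
    have hadj : (Sigma3 r).adjugate =
        !![1 * 1 - r * r, -(1 / Real.sqrt 2 * 1) + r / Real.sqrt 2 * r,
            1 / Real.sqrt 2 * r - r / Real.sqrt 2 * 1;
          -(1 / Real.sqrt 2 * 1) + r * (r / Real.sqrt 2),
            1 * 1 - r / Real.sqrt 2 * (r / Real.sqrt 2),
            -(1 * r) + r / Real.sqrt 2 * (1 / Real.sqrt 2);
          1 / Real.sqrt 2 * r - 1 * (r / Real.sqrt 2),
            -(1 * r) + 1 / Real.sqrt 2 * (r / Real.sqrt 2),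
            1 * 1 - 1 / Real.sqrt 2 * (1 / Real.sqrt 2)] := by
      rw [Sigma3, Matrix.adjugate_fin_three_of]
    rw [hadj]
    simp only [Matrix.smul_apply, Matrix.mulVec, dotProduct, Matrix.of_apply, Fin.sum_univ_three,
      Matrix.cons_val', Matrix.cons_val_zero, Matrix.cons_val_one, Matrix.head_cons,
      Matrix.empty_val', Matrix.cons_val_fin_one, Matrix.cons_val_two, Matrix.tail_cons,
      Matrix.smul_apply, Pi.smul_apply, smul_eq_mul, Ring.inverse_eq_inv']
    have hne : ((1 - r ^ 2) / 2 : ℝ) ≠ 0 := by positivity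
    field_simp
    ring
  have hptw : ∀ t : ℝ, pdf3 r ![t, 0, 0] =
      (Real.sqrt 2 / (2 * π * Real.sqrt (1 - r ^ 2))) * stdPdf (Real.sqrt 2 * t) := by
    intro t
    rw [pdf3, hquad, hdet, stdPdf]
    have hK : Real.sqrt ((2 * π) ^ 3 * ((1 - r ^ 2) / 2)) =
        2 * π * Real.sqrt (1 - r ^ 2) * Real.sqrt (2 * π) / Real.sqrt 2 := by
      have hsq : (2 * π * Real.sqrt (1 - r ^ 2) * Real.sqrt (2 * π) / Real.sqrt 2) ^ 2 =
          (2 * π) ^ 3 * ((1 - r ^ 2) / 2) := by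
        rw [div_pow, mul_pow, mul_pow, hsr2, hs2π2, h2]; ring
      rw [← hsq, Real.sqrt_sq (by positivity)]
    rw [hK]
    have hexp : -(1 / 2 : ℝ) * (2 * t ^ 2) = -(Real.sqrt 2 * t) ^ 2 / 2 := by
      have : (Real.sqrt 2 * t) ^ 2 = 2 * t ^ 2 := by rw [mul_pow, h2]
      rw [this]; ring
    rw [hexp]
    field_simp
    try ring
  have key : (∫ t in Set.Iic (-Δ), stdPdf (Real.sqrt 2 * t)) =
      (Real.sqrt 2)⁻¹ * stdCdf (-(Real.sqrt 2) * Δ) := by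
    have h := MeasureTheory.Measure.integral_comp_mul_left
      (Set.indicator (Set.Iic (-(Real.sqrt 2) * Δ)) stdPdf) (Real.sqrt 2)
    have hcongr : ∀ x : ℝ, (Set.Iic (-(Real.sqrt 2) * Δ)).indicator stdPdf (Real.sqrt 2 * x) =
        (Set.Iic (-Δ)).indicator (fun t => stdPdf (Real.sqrt 2 * t)) x := by
      intro x
      by_cases hx : x ≤ -Δ
      · rw [Set.indicator_of_mem (by
            simp only [Set.mem_Iic]
            calc Real.sqrt 2 * x ≤ Real.sqrt 2 * (-Δ) := by
                  exact mul_le_mul_of_nonneg_left hx hs2.le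
              _ = -(Real.sqrt 2) * Δ := by ring),
          Set.indicator_of_mem (Set.mem_Iic.mpr hx)]
      · rw [Set.indicator_of_notMem (by
            simp only [Set.mem_Iic, not_le] at hx ⊢
            calc -(Real.sqrt 2) * Δ = Real.sqrt 2 * (-Δ) := by ring
              _ < Real.sqrt 2 * x := by exact mul_lt_mul_of_pos_left hx hs2),
          Set.indicator_of_notMem (by simpa using hx)]
    simp_rw [hcongr] at h
    rw [MeasureTheory.integral_indicator measurableSet_Iic,
      MeasureTheory.integral_indicator measurableSet_Iic] at h
    rw [h, abs_of_pos (by positivity), smul_eq_mul]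
    rfl
  calc (∫ t in Set.Iic (-Δ), pdf3 r ![t, 0, 0])
      = ∫ t in Set.Iic (-Δ),
          (Real.sqrt 2 / (2 * π * Real.sqrt (1 - r ^ 2))) * stdPdf (Real.sqrt 2 * t) := by
        exact MeasureTheory.integral_congr_ae (Filter.Eventually.of_forall fun t => hptw t)
    _ = (Real.sqrt 2 / (2 * π * Real.sqrt (1 - r ^ 2))) *
          ∫ t in Set.Iic (-Δ), stdPdf (Real.sqrt 2 * t) := MeasureTheory.integral_const_mul _ _
    _ = (1 / (2 * π * Real.sqrt (1 - r ^ 2))) * stdCdf (-(Real.sqrt 2) * Δ) := by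
        rw [key]
        field_simp
        try ring
end

section
/- Let n ≥ 2, let x ∈ {0,1}ⁿ be a binary vector and y ∈ ℝⁿ arbitrary, and set n₀ = #{i : xᵢ = 0}. Then |K(x,y)| ≤ n₀·(n − n₀); equivalently, the sample Kendall's tau satisfies |τ(x,y)| ≤ 2·n₀·(n − n₀)/(n(n−1)). -/
open Real

/-- Kendall concordance sum `K(x,y) = Σ_{i<j} sgn(xᵢ−xⱼ)·sgn(yᵢ−yⱼ)`. -/
noncomputable def kendallK {n : ℕ} (x y : Fin n → ℝ) : ℝ :=
  ∑ i : Fin n, ∑ j : Fin n,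
    if i < j then Real.sign (x i - x j) * Real.sign (y i - y j) else 0

lemma abs_sign_le_one' (a : ℝ) : |Real.sign a| ≤ 1 := by
  rcases lt_trichotomy a 0 with h | h | h
  · simp [Real.sign_of_neg h]
  · simp [h]
  · simp [Real.sign_of_pos h]

lemma abs_sign_mul_sign_le_one (a b : ℝ) : |Real.sign a * Real.sign b| ≤ 1 := by
  rw [abs_mul]
  exact mul_le_one₀ (abs_sign_le_one' a) (abs_nonneg _) (abs_sign_le_one' b)

/-- Bound on Kendall's concordance sum (hence on sample Kendall's tau) when `x` is a
binary vector with `n₀` zeros: `|K(x,y)| ≤ n₀(n−n₀)` and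
`|τ(x,y)| ≤ 2n₀(n−n₀)/(n(n−1))`. -/
theorem kendall_tau_bound_BC (n : ℕ) (hn : 2 ≤ n) (x y : Fin n → ℝ)
    (hx : ∀ i, x i = 0 ∨ x i = 1) :
    |kendallK x y| ≤
        (Set.ncard {i : Fin n | x i = 0} : ℝ) *
          ((n : ℝ) - (Set.ncard {i : Fin n | x i = 0} : ℝ)) ∧
      |kendallK x y / (n.choose 2 : ℝ)| ≤
        2 * (Set.ncard {i : Fin n | x i = 0} : ℝ) *
          ((n : ℝ) - (Set.ncard {i : Fin n | x i = 0} : ℝ)) /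
            ((n : ℝ) * ((n : ℝ) - 1)) := by
  classical
  set s0 : Finset (Fin n) := Finset.univ.filter (fun i => x i = 0) with hs0
  set s1 : Finset (Fin n) := Finset.univ.filter (fun i => x i = 1) with hs1
  have hcard : {i : Fin n | x i = 0}.ncard = s0.card := by
    have : {i : Fin n | x i = 0} = ↑s0 := by ext i; simp [hs0]
    rw [this, Set.ncard_coe_finset]
  have hsumcard : s0.card + s1.card = n := by
    have h1 : s1 = Finset.univ.filter (fun i => ¬ x i = 0) := by
      apply Finset.filter_congr
      intro i _
      rcases hx i with h | h <;> simp [h]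
    rw [h1, Finset.card_filter_add_card_filter_not, Finset.card_univ, Fintype.card_fin]
  have hn1 : (s1.card : ℝ) = (n : ℝ) - s0.card := by
    have := congrArg (fun m : ℕ => (m : ℝ)) hsumcard
    push_cast at this
    linarith
  -- The key bound
  set t : Fin n → Fin n → ℝ := fun i j =>
    |if i < j then Real.sign (x i - x j) * Real.sign (y i - y j) else 0| with ht
  set g : Fin n → Fin n → ℝ := fun i j =>
    (if x i = 0 then (1 : ℝ) else 0) * (if x j = 1 then (1 : ℝ) else 0) with hg
  have hterm : ∀ i j, t i j + t j i ≤ g i j + g j i := by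
    intro i j
    by_cases hij : i < j
    · have hji : ¬ j < i := asymm hij
      simp only [ht, hg, if_pos hij, if_neg hji, abs_zero, add_zero]
      rcases hx i with h0 | h0 <;> rcases hx j with h1 | h1 <;>
        simp [h0, h1, sub_self] <;>
        first
          | exact abs_sign_mul_sign_le_one _ _
          | exact abs_sign_le_one' _
          | exact mul_le_one₀ (abs_sign_le_one' _) (abs_nonneg _) (abs_sign_le_one' _)
    · by_cases hji : j < i
      · simp only [ht, hg, if_pos hji, if_neg hij, abs_zero, zero_add]
        rcases hx i with h0 | h0 <;> rcases hx j with h1 | h1 <;>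
          simp [h0, h1, sub_self] <;>
          first
            | exact abs_sign_mul_sign_le_one _ _
            | exact abs_sign_le_one' _
            | exact mul_le_one₀ (abs_sign_le_one' _) (abs_nonneg _) (abs_sign_le_one' _)
      · simp only [ht, hg, if_neg hij, if_neg hji, abs_zero, add_zero]
        positivity
  have habs : |kendallK x y| ≤ ∑ i : Fin n, ∑ j : Fin n, t i j := by
    refine (Finset.abs_sum_le_sum_abs _ _).trans ?_
    exact Finset.sum_le_sum fun i _ => Finset.abs_sum_le_sum_abs _ _
  have hsum_g : ∑ i : Fin n, ∑ j : Fin n, g i j = (s0.card : ℝ) * s1.card := by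
    rw [← Finset.sum_mul_sum]
    simp [hg, Finset.sum_boole, hs0, hs1]
  have hsum_t : ∑ i : Fin n, ∑ j : Fin n, t i j ≤ (s0.card : ℝ) * s1.card := by
    have e1 : ∑ i : Fin n, ∑ j : Fin n, t i j = ∑ i : Fin n, ∑ j : Fin n, t j i :=
      Finset.sum_comm
    have e2 : ∑ i : Fin n, ∑ j : Fin n, g i j = ∑ i : Fin n, ∑ j : Fin n, g j i :=
      Finset.sum_comm
    have h2 : (∑ i : Fin n, ∑ j : Fin n, (t i j + t j i))
        ≤ (∑ i : Fin n, ∑ j : Fin n, (g i j + g j i)) :=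
      Finset.sum_le_sum fun i _ => Finset.sum_le_sum fun j _ => hterm i j
    simp only [Finset.sum_add_distrib] at h2
    rw [← e1, ← e2] at h2
    linarith [hsum_g, h2]
  have key : |kendallK x y| ≤ (s0.card : ℝ) * ((n : ℝ) - s0.card) := by
    rw [← hn1]
    exact habs.trans hsum_t
  have hchoose : (n.choose 2 : ℝ) = (n : ℝ) * ((n : ℝ) - 1) / 2 := by
    rw [Nat.cast_choose_two]
  have hC : (0 : ℝ) < (n.choose 2 : ℝ) := by
    exact_mod_cast Nat.choose_pos hn
  constructor
  · rw [hcard]; exact key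
  · rw [hcard]
    rw [abs_div, abs_of_pos hC]
    rw [div_le_div_iff₀ hC (by nlinarith [hchoose])]
    rw [hchoose] at *
    have hpos : (0 : ℝ) < (n : ℝ) * ((n : ℝ) - 1) := by nlinarith
    nlinarith [key, abs_nonneg (kendallK x y)]
end
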